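/- For every N ≥ 1, a linear map Λ from M_n(ℂ) to M_m(ℂ) is N-positive if and only if its Choi matrix C(Λ) is positive on vectors of Schmidt rank at most N, i.e. ⟨u, C(Λ) u⟩ ≥ 0 for every vector u indexed by Fin m × Fin n such that the m × n matrix (M_u)_{i,k} := u_{(i,k)} has rank at most N. -/

import Mathlib

open scoped Kronecker ComplexOrder

/-- The Choi matrix of a linear map `Λ : M_n(ℂ) → M_m(ℂ)`:
`C(Λ) = ∑ i j, Λ(E i j) ⊗ₖ E i j`, a matrix indexed by `Fin m × Fin n`. -/
noncomputable def choi {n m : ℕ}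
    (Λ : Matrix (Fin n) (Fin n) ℂ →ₗ[ℂ] Matrix (Fin m) (Fin m) ℂ) :
    Matrix (Fin m × Fin n) (Fin m × Fin n) ℂ :=
  ∑ i : Fin n, ∑ j : Fin n,
    (Λ (Matrix.single i j 1)) ⊗ₖ (Matrix.single i j 1)

/-- `Λ ⊗ id_N` : the unique linear map with `(Λ ⊗ id_N)(A ⊗ₖ B) = Λ(A) ⊗ₖ B`,
written out explicitly. -/
noncomputable def tensorId {n m : ℕ}
    (Λ : Matrix (Fin n) (Fin n) ℂ →ₗ[ℂ] Matrix (Fin m) (Fin m) ℂ) (N : ℕ)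
    (M : Matrix (Fin n × Fin N) (Fin n × Fin N) ℂ) :
    Matrix (Fin m × Fin N) (Fin m × Fin N) ℂ :=
  Matrix.of fun p q => Λ (Matrix.of fun i j => M (i, p.2) (j, q.2)) p.1 q.1

/-- `Λ` is `N`-positive: `Λ ⊗ id_N` maps PSD matrices to PSD matrices. -/
def NPos {n m : ℕ}
    (Λ : Matrix (Fin n) (Fin n) ℂ →ₗ[ℂ] Matrix (Fin m) (Fin m) ℂ) (N : ℕ) : Prop :=
  ∀ M : Matrix (Fin n × Fin N) (Fin n × Fin N) ℂ,
    M.PosSemidef → (tensorId Λ N M).PosSemidef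

/-- `Λ` is completely positive: `N`-positive for every `N ≥ 1`. -/
def CP {n m : ℕ}
    (Λ : Matrix (Fin n) (Fin n) ℂ →ₗ[ℂ] Matrix (Fin m) (Fin m) ℂ) : Prop :=
  ∀ N : ℕ, 1 ≤ N → NPos Λ N

namespace ChoiAux

open Matrix

lemma choi_apply' {n m : ℕ} (Λ : Matrix (Fin n) (Fin n) ℂ →ₗ[ℂ] Matrix (Fin m) (Fin m) ℂ)
    (p q : Fin m × Fin n) :
    choi Λ p q = Λ (Matrix.single p.2 q.2 1) p.1 q.1 := by
  obtain ⟨i, k⟩ := p; obtain ⟨j, l⟩ := q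
  simp [choi, Matrix.sum_apply, Matrix.kroneckerMap_apply, Matrix.single,
    Matrix.of_apply, Finset.sum_ite_eq, ite_and]

lemma lam_expand_of {n m : ℕ} (Λ : Matrix (Fin n) (Fin n) ℂ →ₗ[ℂ] Matrix (Fin m) (Fin m) ℂ)
    (f : Fin n → Fin n → ℂ) (i j : Fin m) :
    Λ (Matrix.of f) i j = ∑ k, ∑ l, f k l * Λ (Matrix.single k l 1) i j := by
  conv_lhs => rw [matrix_eq_sum_single (Matrix.of f)]
  rw [map_sum, Matrix.sum_apply]
  refine Finset.sum_congr rfl fun k _ => ?_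
  rw [map_sum, Matrix.sum_apply]
  refine Finset.sum_congr rfl fun l _ => ?_
  have h : Matrix.single k l (Matrix.of f k l) = Matrix.of f k l • Matrix.single k l (1:ℂ) := by
    rw [smul_single, smul_eq_mul, mul_one]
  rw [h, _root_.map_smul]
  simp [smul_eq_mul]

/-- The key algebraic identity relating the Choi form and the `tensorId` form. -/
lemma key {n m N : ℕ} (Λ : Matrix (Fin n) (Fin n) ℂ →ₗ[ℂ] Matrix (Fin m) (Fin m) ℂ)
    (x : Fin m × Fin N → ℂ) (v : Fin n × Fin N → ℂ) :
    dotProduct (star fun p : Fin m × Fin n => ∑ a, x (p.1, a) * star (v (p.2, a)))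
      ((choi Λ).mulVec (fun p : Fin m × Fin n => ∑ a, x (p.1, a) * star (v (p.2, a))))
    = dotProduct (star x)
      ((tensorId Λ N (Matrix.of fun p q => v p * star (v q))).mulVec x) := by
  simp only [dotProduct, mulVec, Pi.star_apply, choi_apply', tensorId, Matrix.of_apply,
    lam_expand_of, star_sum, star_mul', star_star, Finset.sum_mul, Finset.mul_sum,
    Fintype.sum_prod_type]
  conv_lhs => enter [2,i,2,k,2,j,2,l]; rw [Finset.sum_comm]
  conv_lhs => enter [2,i,2,k,2,j]; rw [Finset.sum_comm]
  conv_lhs => enter [2,i,2,k]; rw [Finset.sum_comm]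
  conv_lhs => enter [2,i]; rw [Finset.sum_comm]
  conv_lhs => enter [2,i,2,a]; rw [Finset.sum_comm]
  conv_lhs => enter [2,i,2,a,2,j,2,k]; rw [Finset.sum_comm]
  conv_lhs => enter [2,i,2,a,2,j]; rw [Finset.sum_comm]
  refine Finset.sum_congr rfl fun i _ => Finset.sum_congr rfl fun a _ =>
    Finset.sum_congr rfl fun j _ => Finset.sum_congr rfl fun b _ =>
    Finset.sum_congr rfl fun k _ => Finset.sum_congr rfl fun l _ => by ring

lemma exists_fact {m n N : ℕ} (A : Matrix (Fin m) (Fin n) ℂ) (h : A.rank ≤ N) :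
    ∃ (X : Matrix (Fin m) (Fin N) ℂ) (Y : Matrix (Fin N) (Fin n) ℂ), A = X * Y := by
  classical
  set W := LinearMap.range A.mulVecLin with hW
  have hfin : Module.finrank ℂ W = A.rank := rfl
  set r := Module.finrank ℂ W with hr
  have hrN : r ≤ N := by rw [hfin]; exact h
  let b : Module.Basis (Fin r) ℂ W := Module.finBasis ℂ W
  let w : Fin n → W := fun k => ⟨A.mulVec (Pi.single k 1), LinearMap.mem_range_self _ _⟩
  refine ⟨Matrix.of fun i a => if h : (a : ℕ) < r then ((b ⟨(a : ℕ), h⟩ : Fin m → ℂ) i) else 0,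
          Matrix.of fun a k => if h : (a : ℕ) < r then b.repr (w k) ⟨(a : ℕ), h⟩ else 0, ?_⟩
  ext i k
  rw [Matrix.mul_apply]
  symm
  set F : ℕ → ℂ := fun j => if h : j < r then ((b ⟨j, h⟩ : Fin m → ℂ) i) * b.repr (w k) ⟨j, h⟩ else 0
    with hF
  trans (∑ j : Fin N, F (j : ℕ))
  · refine Finset.sum_congr rfl fun a _ => ?_
    simp only [Matrix.of_apply, hF]
    split_ifs with hc
    · rfl
    · simp
  rw [Fin.sum_univ_eq_sum_range F N]
  rw [← Finset.sum_subset (Finset.range_subset_range.mpr hrN)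
    (fun j _ hj => by rw [hF]; exact dif_neg (by simpa using hj))]
  rw [← Fin.sum_univ_eq_sum_range F r]
  have hsr : ∑ t : Fin r, F (t : ℕ) = ∑ t : Fin r, (b t : Fin m → ℂ) i * b.repr (w k) t := by
    refine Finset.sum_congr rfl fun t _ => ?_
    rw [hF]; simp only [dif_pos t.2]
  rw [hsr]
  symm
  have hw := b.sum_repr (w k)
  have : ((∑ t, b.repr (w k) t • b t : W) : Fin m → ℂ) i = ((w k : Fin m → ℂ)) i := by rw [hw]
  rw [show ((w k : Fin m → ℂ)) i = A i k by simp [w, Matrix.mulVec_single_one]] at this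
  rw [← this]
  simp only [AddSubmonoidClass.coe_finset_sum, SetLike.val_smul, Finset.sum_apply, Pi.smul_apply,
    smul_eq_mul]
  exact Finset.sum_congr rfl fun t _ => mul_comm _ _

lemma isHermitian_of_forms {ι : Type*} [Fintype ι] [DecidableEq ι] (T : Matrix ι ι ℂ)
    (h : ∀ y : ι → ℂ, star (dotProduct (star y) (T.mulVec y))
        = dotProduct (star y) (T.mulVec y)) : T.IsHermitian := by
  rw [Matrix.isHermitian_iff_isSymmetric, LinearMap.isSymmetric_iff_inner_map_self_real]
  intro v
  have hv : inner ℂ (Matrix.toEuclideanLin T v) v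
      = star (dotProduct (star ((WithLp.equiv 2 (ι → ℂ)) v))
          (T.mulVec ((WithLp.equiv 2 (ι → ℂ)) v))) := by
    rw [EuclideanSpace.inner_eq_star_dotProduct]
    simp only [WithLp.equiv_apply, Matrix.ofLp_toEuclideanLin_apply]
    rw [Matrix.star_dotProduct, star_star, dotProduct_comm]
  rw [hv, h]
  exact h _

lemma rankone_psd {ι : Type*} [Fintype ι] [DecidableEq ι] (v : ι → ℂ) :
    (Matrix.of fun p q => v p * star (v q)).PosSemidef := by
  refine PosSemidef.of_dotProduct_mulVec_nonneg ?_ ?_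
  · ext p q
    simp [Matrix.conjTranspose_apply, mul_comm]
  · intro y
    have : dotProduct (star y) ((Matrix.of fun p q => v p * star (v q)).mulVec y)
        = star (∑ q, star (v q) * y q) * (∑ q, star (v q) * y q) := by
      simp only [dotProduct, mulVec, Matrix.of_apply, Pi.star_apply, star_sum, star_mul',
        star_star, Finset.sum_mul, Finset.mul_sum]
      conv_rhs => rw [Finset.sum_comm]
      refine Finset.sum_congr rfl fun p _ => Finset.sum_congr rfl fun q _ => by ring
    rw [this]
    exact star_mul_self_nonneg _

lemma form_sum {ι κ : Type*} [Fintype ι] [Fintype κ] (T : κ → Matrix ι ι ℂ) (y : ι → ℂ) :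
    dotProduct (star y) ((∑ c, T c).mulVec y)
      = ∑ c, dotProduct (star y) ((T c).mulVec y) := by
  simp only [dotProduct, mulVec, Matrix.sum_apply, Pi.star_apply, Finset.mul_sum,
    Finset.sum_mul]
  conv_lhs => enter [2,p]; rw [Finset.sum_comm]
  conv_lhs => rw [Finset.sum_comm]

lemma tensorId_sum {n m N : ℕ} (Λ : Matrix (Fin n) (Fin n) ℂ →ₗ[ℂ] Matrix (Fin m) (Fin m) ℂ)
    {κ : Type*} [Fintype κ] (Ms : κ → Matrix (Fin n × Fin N) (Fin n × Fin N) ℂ) :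
    tensorId Λ N (∑ c, Ms c) = ∑ c, tensorId Λ N (Ms c) := by
  ext p q
  simp only [tensorId, Matrix.of_apply, Matrix.sum_apply]
  rw [show (Matrix.of fun i j => ∑ c, Ms c (i, p.2) (j, q.2))
      = ∑ c, Matrix.of fun i j => Ms c (i, p.2) (j, q.2) by
    ext i j; simp [Matrix.sum_apply]]
  rw [map_sum, Matrix.sum_apply]

end ChoiAux

open ChoiAux Matrix in
/-- for every `N ≥ 1`, `Λ` is `N`-positive iff its Choi matrix is positive on
vectors of Schmidt rank at most `N`. -/
theorem NPos_iff_choi_pos_on_schmidt_rank_le {n m : ℕ}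
    (Λ : Matrix (Fin n) (Fin n) ℂ →ₗ[ℂ] Matrix (Fin m) (Fin m) ℂ) :
    ∀ N : ℕ, 1 ≤ N →
      (NPos Λ N ↔
        ∀ u : Fin m × Fin n → ℂ,
          (Matrix.of fun (i : Fin m) (k : Fin n) => u (i, k)).rank ≤ N →
          0 ≤ dotProduct (star u) ((choi Λ).mulVec u)) := by
  intro N hN
  constructor
  · -- N-positive → positivity on Schmidt rank ≤ N vectors
    intro h u hrank
    obtain ⟨X, Y, hXY⟩ := exists_fact _ hrank
    set x : Fin m × Fin N → ℂ := fun p => X p.1 p.2 with hx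
    set v : Fin n × Fin N → ℂ := fun p => star (Y p.2 p.1) with hvdef
    have hu : u = fun p : Fin m × Fin n => ∑ a, x (p.1, a) * star (v (p.2, a)) := by
      funext p
      have h1 : u p = (Matrix.of fun (i : Fin m) (k : Fin n) => u (i, k)) p.1 p.2 := by
        simp [Matrix.of_apply]
      rw [h1, hXY, Matrix.mul_apply]
      simp [hx, hvdef]
    have hM : (Matrix.of fun p q => v p * star (v q)).PosSemidef := rankone_psd v
    have hb := (h _ hM).dotProduct_mulVec_nonneg x
    rw [hu, key]
    exact hb
  · -- positivity on Schmidt rank ≤ N vectors → N-positive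
    intro h M hM
    obtain ⟨B, hB⟩ : ∃ B : Matrix (Fin n × Fin N) (Fin n × Fin N) ℂ, M = Bᴴ * B := by
      open scoped MatrixOrder in
      obtain ⟨B, hB⟩ := CStarAlgebra.nonneg_iff_eq_star_mul_self.mp hM.nonneg
      exact ⟨B, hB⟩
    -- decompose M into rank-one pieces
    set vv : (Fin n × Fin N) → (Fin n × Fin N) → ℂ := fun c p => star (B c p) with hvv
    have hMsum : M = ∑ c, Matrix.of fun p q => vv c p * star (vv c q) := by
      ext p q
      rw [hB, Matrix.mul_apply, Matrix.sum_apply]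
      refine Finset.sum_congr rfl fun c _ => ?_
      simp [hvv, Matrix.conjTranspose_apply, mul_comm]
    have hform : ∀ y : Fin m × Fin N → ℂ,
        0 ≤ dotProduct (star y) ((tensorId Λ N M).mulVec y) := by
      intro y
      rw [hMsum, tensorId_sum, form_sum]
      refine Finset.sum_nonneg fun c _ => ?_
      rw [← key Λ y (vv c)]
      refine h _ ?_
      -- rank bound
      have hfac : (Matrix.of fun (i : Fin m) (k : Fin n) =>
            (fun p : Fin m × Fin n => ∑ a, y (p.1, a) * star (vv c (p.2, a))) (i, k))
          = (Matrix.of fun (i : Fin m) (a : Fin N) => y (i, a)) *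
            (Matrix.of fun (a : Fin N) (k : Fin n) => star (vv c (k, a))) := by
        ext i k
        simp [Matrix.mul_apply]
      rw [hfac]
      calc ((Matrix.of fun (i : Fin m) (a : Fin N) => y (i, a)) *
            (Matrix.of fun (a : Fin N) (k : Fin n) => star (vv c (k, a)))).rank
          ≤ (Matrix.of fun (i : Fin m) (a : Fin N) => y (i, a)).rank :=
            Matrix.rank_mul_le_left _ _
        _ ≤ Fintype.card (Fin N) := Matrix.rank_le_card_width _
        _ = N := Fintype.card_fin N
    exact PosSemidef.of_dotProduct_mulVec_nonneg (isHermitian_of_forms _ fun y => by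
      have h0 := hform y
      rw [Complex.le_def] at h0
      rw [Complex.star_def, Complex.conj_eq_iff_im]
      exact h0.2.symm) hform
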